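/- For subsets A, B of ℕ, A is finitely embeddable in B if and only if there exists an ultrafilter V on ℕ such that for every ultrafilter U on ℕ with A ∈ U, one has B ∈ U ⊕ V. -/

import Mathlib

/-- `A ≤_fe B`: every finite subset of `A` has a translate contained in `B`. -/
def fe (A B : Set ℕ) : Prop :=
  ∀ F : Finset ℕ, ↑F ⊆ A → ∃ n : ℕ, ∀ a ∈ F, n + a ∈ B

/-- The sum of ultrafilters on ℕ: `A ∈ usum U V ↔ {n | {m | n + m ∈ A} ∈ V} ∈ U`. -/
def usum (U V : Ultrafilter ℕ) : Ultrafilter ℕ :=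
  U.bind fun n => V.map fun m => n + m

lemma mem_usum {U V : Ultrafilter ℕ} {B : Set ℕ} :
    B ∈ usum U V ↔ {n | {m | n + m ∈ B} ∈ V} ∈ U := by
  simp [usum, Ultrafilter.bind, Filter.mem_bind', Ultrafilter.mem_map]
  rfl

/-- `A ≤_fe B` iff some ultrafilter `V` satisfies: `B ∈ U ⊕ V` for every
ultrafilter `U` containing `A`. -/
theorem stmt5 (A B : Set ℕ) :
    fe A B ↔ ∃ V : Ultrafilter ℕ, ∀ U : Ultrafilter ℕ, A ∈ U → B ∈ usum U V := by
  classical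
  constructor
  · intro h
    set S : Set (Set ℕ) := {s | ∃ F : Finset ℕ, ↑F ⊆ A ∧ s = {m | ∀ a ∈ F, m + a ∈ B}}
      with hS
    have hne : (Filter.generate S).NeBot := by
      rw [Filter.generate_neBot_iff]
      intro t hts ht
      have key : ∀ t : Set (Set ℕ), t.Finite → t ⊆ S →
          ∃ F : Finset ℕ, ↑F ⊆ A ∧ ∀ s ∈ t, {m | ∀ a ∈ F, m + a ∈ B} ⊆ s := by
        intro t ht
        refine Set.Finite.induction_on (motive := fun t _ => t ⊆ S →
          ∃ F : Finset ℕ, ↑F ⊆ A ∧ ∀ s ∈ t, {m | ∀ a ∈ F, m + a ∈ B} ⊆ s) t ht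
          (fun _ => ⟨∅, by simp, by simp⟩) ?_
        intro a s _ _ ih hsub
        obtain ⟨F, hFA, hF⟩ := ih (fun x hx => hsub (Set.mem_insert_of_mem _ hx))
        obtain ⟨G, hGA, hG⟩ := hsub (Set.mem_insert a s)
        refine ⟨F ∪ G, ?_, ?_⟩
        · push_cast; exact Set.union_subset hFA hGA
        · intro x hx
          rcases hx with rfl | hx
          · intro m hm
            rw [hG]
            exact fun b hb => hm b (Finset.mem_union_right _ hb)
          · exact fun m hm => hF x hx (fun b hb => hm b (Finset.mem_union_left _ hb))
      obtain ⟨F, hFA, hF⟩ := key t ht hts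
      obtain ⟨n, hn⟩ := h F hFA
      exact ⟨n, fun s hs => hF s hs hn⟩
    refine ⟨Ultrafilter.of (Filter.generate S), fun U hU => ?_⟩
    rw [mem_usum]
    refine U.toFilter.mem_of_superset hU (fun a ha => ?_)
    have hmem : {m | m + a ∈ B} ∈ Filter.generate S := by
      apply Filter.mem_generate_of_mem
      exact ⟨{a}, by simpa using ha, by simp⟩
    have := Ultrafilter.of_le (Filter.generate S) hmem
    simpa [add_comm] using this
  · rintro ⟨V, hV⟩ F hFA
    have hmem : ∀ a ∈ F, {m | a + m ∈ B} ∈ V := by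
      intro a ha
      have hA : A ∈ (pure a : Ultrafilter ℕ) := hFA ha
      have := hV (pure a) hA
      rw [mem_usum] at this
      simpa using this
    have hinter : (⋂ a ∈ F, {m | a + m ∈ B}) ∈ V :=
      (Filter.biInter_finset_mem F).2 hmem
    obtain ⟨n, hn⟩ := Ultrafilter.nonempty_of_mem hinter
    refine ⟨n, fun a ha => ?_⟩
    have := Set.mem_iInter₂.1 hn a ha
    simpa [add_comm] using this
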